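/- Let Φ be a left permutive cellular automaton with no memory such that Φ^n has positive anticipation for all n ≥ 1, and let (z_1, z_2, ...) ∈ A^ℕ be Φ_R-fixed. Then within the set C = {x ∈ A^ℤ : x_i = z_i for all i ≥ 1}, the set of points x with finite forward Φ-orbit is a countable union of closed nowhere dense subsets of C; equivalently, the set of x ∈ C with infinite forward orbit is a dense G_δ subset of C. -/
import Mathlib


/-- Left permutive local rule. -/
def LeftPermutive {A : Type*} {r : ℕ} (φ : (Fin (r + 1) → A) → A) : Prop :=
  ∀ t : Fin r → A, Function.Bijective fun a : A => φ (Fin.cons a t)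

/-- `Φ` is the two-sided cellular automaton on `A^ℤ` induced by the local rule `φ`. -/
def IsCA {A : Type*} {r : ℕ} (φ : (Fin (r + 1) → A) → A) (Φ : (ℤ → A) → ℤ → A) : Prop :=
  ∀ x i, Φ x i = φ fun j : Fin (r + 1) => x (i + (j : ℕ))

/-- `ΦR` is the one-sided cellular automaton on `A^ℕ` induced by the local rule `φ`. -/
def IsCAR {A : Type*} {r : ℕ} (φ : (Fin (r + 1) → A) → A) (ΦR : (ℕ → A) → ℕ → A) : Prop :=
  ∀ x i, ΦR x i = φ fun j : Fin (r + 1) => x (i + (j : ℕ))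

/-- A memoryless map `F` on `A^ℤ` has zero anticipation if it is induced coordinatewise
by a single map of the alphabet; positive anticipation is the negation of this. -/
def ZeroAnticipation {A : Type*} (F : (ℤ → A) → ℤ → A) : Prop :=
  ∃ ψ : A → A, ∀ x i, F x i = ψ (x i)

/-- The set `C = {x : x_i = z_i for all i ≥ 1}` (here `z n` plays the role of
`z_{n+1}`). -/
def rightCyl {A : Type*} (z : ℕ → A) : Set (ℤ → A) :=
  {x | ∀ n : ℕ, x ((n : ℤ) + 1) = z n}

section helpers
variable {A : Type*} {r : ℕ} (φ : (Fin (r + 1) → A) → A) (Φ : (ℤ → A) → ℤ → A)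

lemma window_eq (x : ℤ → A) (i : ℤ) :
    (fun j : Fin (r + 1) => x (i + (j : ℕ)))
      = Fin.cons (x i) (fun j : Fin r => x (i + 1 + (j : ℕ))) := by
  funext j
  refine Fin.cases ?_ (fun j => ?_) j
  · simp
  · rw [Fin.cons_succ]
    congr 1
    push_cast [Fin.val_succ]
    ring

lemma ca_shift (hΦ : IsCA φ Φ) (x : ℤ → A) (c i : ℤ) :
    Φ (fun j => x (j + c)) i = Φ x (i + c) := by
  rw [hΦ, hΦ]
  congr 1
  funext j
  congr 1
  ring

lemma ca_shift_iter (hΦ : IsCA φ Φ) (k : ℕ) (x : ℤ → A) (c : ℤ) :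
    Φ^[k] (fun j => x (j + c)) = fun i => Φ^[k] x (i + c) := by
  induction k with
  | zero => rfl
  | succ k ih =>
    rw [Function.iterate_succ_apply', ih]
    funext i
    rw [Function.iterate_succ_apply']
    exact ca_shift φ Φ hΦ _ c i

lemma ca_local (hΦ : IsCA φ Φ) :
    ∀ (k : ℕ) (x y : ℤ → A) (a b : ℤ),
      (∀ j, a ≤ j → j ≤ b + (k * r : ℕ) → x j = y j) →
      ∀ i, a ≤ i → i ≤ b → Φ^[k] x i = Φ^[k] y i := by
  intro k
  induction k with
  | zero =>
    intro x y a b h i hi hib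
    simpa using h i hi (by simpa using hib)
  | succ k ih =>
    intro x y a b h i hi hib
    rw [Function.iterate_succ_apply', Function.iterate_succ_apply', hΦ, hΦ]
    congr 1
    funext j
    have hj : ((j : ℕ) : ℤ) ≤ (r : ℤ) := by exact_mod_cast Nat.lt_succ_iff.mp j.isLt
    have hj0 : (0:ℤ) ≤ ((j : ℕ) : ℤ) := Int.natCast_nonneg _
    refine ih x y a (b + r) (fun j' hj' hj'b => h j' hj' ?_) (i + (j : ℕ)) (by linarith) (by linarith)
    have e : ((k+1) * r : ℕ) = k * r + r := by ring
    rw [e]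
    push_cast at hj'b ⊢
    linarith

lemma ca_mapsTo {ΦR : (ℕ → A) → ℕ → A} (hΦ : IsCA φ Φ) (hΦR : IsCAR φ ΦR)
    {z : ℕ → A} (hz : ΦR z = z) :
    ∀ x ∈ rightCyl z, Φ x ∈ rightCyl z := by
  intro x hx n
  rw [hΦ]
  have hw : (fun j : Fin (r+1) => x ((n:ℤ) + 1 + (j:ℕ))) = fun j : Fin (r+1) => z (n + (j:ℕ)) := by
    funext j
    have h1 := hx (n + (j:ℕ))
    rw [show (n:ℤ) + 1 + ((j:ℕ):ℤ) = (((n + (j:ℕ) : ℕ)) : ℤ) + 1 by push_cast; ring]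
    exact h1
  rw [hw, ← hΦR z n]
  exact congrFun hz n

lemma ca_inj (hΦ : IsCA φ Φ) (hlp : LeftPermutive φ) (z : ℕ → A) :
    ∀ x y, x ∈ rightCyl z → y ∈ rightCyl z → Φ x = Φ y → x = y := by
  intro x y hx hy h
  have key : ∀ n : ℕ, ∀ j : ℤ, 1 - (n:ℤ) ≤ j → x j = y j := by
    intro n
    induction n with
    | zero =>
      intro j hj
      have h1 : (1:ℤ) ≤ j := by simpa using hj
      have hxv := hx (j-1).toNat
      have hyv := hy (j-1).toNat
      have hje : (((j-1).toNat : ℕ) : ℤ) + 1 = j := by omega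
      rw [hje] at hxv hyv
      rw [hxv, hyv]
    | succ n ih =>
      intro j hj
      rcases eq_or_lt_of_le hj with he | hlt
      · have hw := congrFun h j
        rw [hΦ x j, hΦ y j, window_eq, window_eq] at hw
        have htail : (fun t : Fin r => x (j + 1 + (t:ℕ))) = fun t : Fin r => y (j + 1 + (t:ℕ)) := by
          funext t
          exact ih (j + 1 + (t:ℕ)) (by omega)
        rw [htail] at hw
        exact (hlp _).1 hw
      · exact ih j (by push_cast at hlt ⊢; omega)
  funext j
  exact key (1 - j).toNat j (by omega)

lemma ca_inj_iter {ΦR : (ℕ → A) → ℕ → A} (hΦ : IsCA φ Φ) (hΦR : IsCAR φ ΦR)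
    (hlp : LeftPermutive φ) {z : ℕ → A} (hz : ΦR z = z) :
    ∀ m x y, x ∈ rightCyl z → y ∈ rightCyl z → Φ^[m] x = Φ^[m] y → x = y := by
  intro m
  induction m with
  | zero => intro x y _ _ h; simpa using h
  | succ m ih =>
    intro x y hx hy h
    rw [Function.iterate_succ_apply, Function.iterate_succ_apply] at h
    exact ca_inj φ Φ hΦ hlp z x y hx hy
      (ih (Φ x) (Φ y) (ca_mapsTo φ Φ hΦ hΦR hz x hx) (ca_mapsTo φ Φ hΦ hΦR hz y hy) h)

lemma ca_mapsTo_iter {ΦR : (ℕ → A) → ℕ → A} (hΦ : IsCA φ Φ) (hΦR : IsCAR φ ΦR)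
    {z : ℕ → A} (hz : ΦR z = z) :
    ∀ m x, x ∈ rightCyl z → Φ^[m] x ∈ rightCyl z := by
  intro m
  induction m with
  | zero => intro x hx; simpa using hx
  | succ m ih =>
    intro x hx
    rw [Function.iterate_succ_apply']
    exact ca_mapsTo φ Φ hΦ hΦR hz _ (ih x hx)

end helpers

theorem finite_orbit_meagre_in_fiber {A : Type*} [Fintype A] [TopologicalSpace A]
    [DiscreteTopology A] {r : ℕ}
    (φ : (Fin (r + 1) → A) → A) (Φ : (ℤ → A) → ℤ → A) (ΦR : (ℕ → A) → ℕ → A)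
    (hΦ : IsCA φ Φ) (hΦR : IsCAR φ ΦR) (hlp : LeftPermutive φ)
    (hpos : ∀ n : ℕ, 1 ≤ n → ¬ ZeroAnticipation Φ^[n])
    (z : ℕ → A) (hz : ΦR z = z) :
    (∃ F : ℕ → Set (rightCyl z),
      (∀ m, IsClosed (F m) ∧ IsNowhereDense (F m)) ∧
      {x : rightCyl z | (Set.range fun n : ℕ => Φ^[n] (x : ℤ → A)).Finite} = ⋃ m, F m) ∧
    (Dense {x : rightCyl z | (Set.range fun n : ℕ => Φ^[n] (x : ℤ → A)).Infinite} ∧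
      IsGδ {x : rightCyl z | (Set.range fun n : ℕ => Φ^[n] (x : ℤ → A)).Infinite}) := by
  classical
  -- continuity of Φ
  have hcont : Continuous Φ := by
    refine continuous_pi fun i => ?_
    have he : (fun x : ℤ → A => Φ x i)
        = φ ∘ (fun (x : ℤ → A) (j : Fin (r+1)) => x (i + (j:ℕ))) := funext fun x => hΦ x i
    rw [he]
    exact continuous_of_discreteTopology.comp (continuous_pi fun j => continuous_apply _)
  -- the interiors of the fixed-point sets are empty
  have hint : ∀ k : ℕ, 1 ≤ k →
      interior {x : rightCyl z | Φ^[k] (x : ℤ → A) = (x : ℤ → A)} = ∅ := by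
    intro k hk
    rw [Set.eq_empty_iff_forall_notMem]
    intro x hx
    have hmem : {x : rightCyl z | Φ^[k] (x:ℤ→A) = (x:ℤ→A)} ∈ nhds x :=
      mem_interior_iff_mem_nhds.mp hx
    rw [mem_nhds_subtype] at hmem
    obtain ⟨V, hV, hVsub⟩ := hmem
    rw [nhds_pi, Filter.mem_pi] at hV
    obtain ⟨I, hIfin, t, ht, hsub⟩ := hV
    have htx : ∀ i, (x : ℤ → A) i ∈ t i := fun i => mem_of_mem_nhds (ht i)
    obtain ⟨b, hb⟩ := hIfin.bddBelow
    set c : ℤ := min b 1 with hc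
    have hc1 : c ≤ 1 := min_le_right b 1
    have hcb : c ≤ b := min_le_left b 1
    have hkr : (0:ℤ) ≤ ((k*r : ℕ) : ℤ) := Int.natCast_nonneg _
    set i0 : ℤ := c - 1 - ((k * r : ℕ) : ℤ) with hi0
    have hclaim : ∀ u : ℤ → A, Φ^[k] u i0 = u i0 := by
      intro u
      set y : ℤ → A := fun j => if j < c then u j else (x : ℤ → A) j with hy
      have hyC : y ∈ rightCyl z := by
        intro n
        have hn : ¬ ((n:ℤ) + 1 < c) := by
          have : (0:ℤ) ≤ (n:ℤ) := Int.natCast_nonneg _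
          omega
        simp only [hy]
        rw [if_neg hn]
        exact x.2 n
      have hyV : y ∈ V := by
        refine hsub fun i hi => ?_
        have hbi : b ≤ i := hb hi
        have hic : ¬ (i < c) := by omega
        simp only [hy]
        rw [if_neg hic]
        exact htx i
      have hfix : Φ^[k] y = y :=
        hVsub (show (⟨y, hyC⟩ : rightCyl z) ∈ Subtype.val ⁻¹' V from hyV)
      have hloc : Φ^[k] u i0 = Φ^[k] y i0 := by
        refine ca_local φ Φ hΦ k u y i0 i0 (fun j hj1 hj2 => ?_) i0 le_rfl le_rfl
        have hjc : j < c := by omega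
        simp only [hy]
        rw [if_pos hjc]
      rw [hloc, congrFun hfix i0]
      simp only [hy]
      rw [if_pos (by omega : i0 < c)]
    refine hpos k hk ⟨id, fun w p => ?_⟩
    have h1 := hclaim (fun j => w (j + (p - i0)))
    rw [ca_shift_iter φ Φ hΦ k w (p - i0)] at h1
    have hp : i0 + (p - i0) = p := by ring
    simp only [hp] at h1
    exact h1
  -- closedness of the fixed-point sets
  have hclosed : ∀ k : ℕ, IsClosed {x : rightCyl z | Φ^[k] (x:ℤ→A) = (x:ℤ→A)} := by
    intro k
    have h1 : IsClosed {y : ℤ → A | Φ^[k] y = y} := isClosed_eq (hcont.iterate k) continuous_id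
    exact h1.preimage continuous_subtype_val
  set F : ℕ → Set (rightCyl z) :=
    fun m => {x : rightCyl z | Φ^[m+1] (x:ℤ→A) = (x:ℤ→A)} with hF
  have hFeq : {x : rightCyl z | (Set.range fun n : ℕ => Φ^[n] (x : ℤ → A)).Finite} = ⋃ m, F m := by
    ext x
    simp only [Set.mem_setOf_eq, Set.mem_iUnion, hF]
    constructor
    · intro hfin
      have hni : ¬ Function.Injective (fun n : ℕ => Φ^[n] (x:ℤ→A)) := by
        intro hinj
        exact Set.infinite_range_of_injective hinj hfin
      rw [Function.not_injective_iff] at hni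
      obtain ⟨a, b, hab, hne⟩ := hni
      have key : ∀ a b : ℕ, a < b → Φ^[a] (x:ℤ→A) = Φ^[b] (x:ℤ→A) →
          ∃ m, Φ^[m+1] (x:ℤ→A) = (x:ℤ→A) := by
        intro a b hlt heq
        have h1 : Φ^[a] (Φ^[b-a] (x:ℤ→A)) = Φ^[a] (x:ℤ→A) := by
          rw [← Function.iterate_add_apply, show a + (b - a) = b by omega]
          exact heq.symm
        have h2 : Φ^[b-a] (x:ℤ→A) = (x:ℤ→A) :=
          ca_inj_iter φ Φ hΦ hΦR hlp hz a _ _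
            (ca_mapsTo_iter φ Φ hΦ hΦR hz (b-a) _ x.2) x.2 h1
        exact ⟨b - a - 1, by rw [show b - a - 1 + 1 = b - a by omega]; exact h2⟩
      rcases hne.lt_or_gt with hlt | hlt
      · exact key a b hlt hab
      · exact key b a hlt hab.symm
    · rintro ⟨m, hm⟩
      have hper : ∀ n : ℕ, Φ^[n] (x:ℤ→A) = Φ^[n % (m+1)] (x:ℤ→A) := by
        intro n
        induction n using Nat.strong_induction_on with
        | _ n ih =>
          by_cases hn : n < m + 1
          · rw [Nat.mod_eq_of_lt hn]
          · push_neg at hn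
            calc Φ^[n] (x:ℤ→A) = Φ^[(n-(m+1)) + (m+1)] (x:ℤ→A) := by
                  rw [show (n-(m+1))+(m+1) = n by omega]
              _ = Φ^[n-(m+1)] (x:ℤ→A) := by rw [Function.iterate_add_apply, hm]
              _ = Φ^[(n-(m+1)) % (m+1)] (x:ℤ→A) := ih _ (by omega)
              _ = Φ^[n % (m+1)] (x:ℤ→A) := by
                  rw [← Nat.add_mod_right (n-(m+1)) (m+1),
                    show n-(m+1)+(m+1) = n by omega]
      refine Set.Finite.subset ((Set.finite_Iio (m+1)).image fun n => Φ^[n] (x:ℤ→A)) ?_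
      rintro _ ⟨n, rfl⟩
      exact ⟨n % (m+1), Nat.mod_lt _ (by omega), (hper n).symm⟩
  have hSeq : {x : rightCyl z | (Set.range fun n : ℕ => Φ^[n] (x:ℤ→A)).Infinite}
      = ⋂ m, (F m)ᶜ := by
    rw [← Set.compl_iUnion, ← hFeq]
    rfl
  have hCclosed : IsClosed (rightCyl z) := by
    have he : rightCyl z = ⋂ n : ℕ, {x : ℤ → A | x ((n:ℤ)+1) = z n} := by
      ext x
      simp only [Set.mem_iInter, Set.mem_setOf_eq]
      exact Iff.rfl
    rw [he]
    exact isClosed_iInter fun n => isClosed_eq (continuous_apply _) continuous_const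
  haveI : CompactSpace (rightCyl z) := isCompact_iff_compactSpace.mp hCclosed.isCompact
  haveI : LocallyCompactSpace (rightCyl z) := by infer_instance
  haveI : RegularSpace (rightCyl z) := by infer_instance
  refine ⟨⟨F, fun m => ⟨hclosed (m+1), ?_⟩, hFeq⟩, ?_, ?_⟩
  · show interior (closure (F m)) = ∅
    rw [(hclosed (m+1)).closure_eq]
    exact hint (m+1) (by omega)
  · rw [hSeq]
    exact dense_iInter_of_isOpen (fun m => (hclosed (m+1)).isOpen_compl)
      (fun m => interior_eq_empty_iff_dense_compl.mp (hint (m+1) (by omega)))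
  · rw [hSeq]
    exact IsGδ.iInter fun m => ((hclosed (m+1)).isOpen_compl).isGδ
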